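/- Let p be a prime and G a finite p-group. Then G is autonilpotent if and only if Aut G is a p-group. -/

import Mathlib

/-- The autocommutator `[x, α] = x⁻¹ · α(x)`. -/
def autoComm {G : Type*} [Group G] (x : G) (α : MulAut G) : G := x⁻¹ * α x

/-- `autoL G n = Lₙ(G)`: elements `x` with `[x, α₁, …, αₙ] = 1` for all `α₁, …, αₙ ∈ Aut G`. -/
def autoL (G : Type*) [Group G] (n : ℕ) : Set G :=
  {x | ∀ l : List (MulAut G), l.length = n → l.foldl autoComm x = 1}

/-- A group is autonilpotent if `G = Lₙ(G)` for some `n`. -/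
def Autonilpotent (G : Type*) [Group G] : Prop := ∃ n : ℕ, ∀ x : G, x ∈ autoL G n

section Helpers

variable {G : Type*} [Group G]

lemma autoComm_foldl_replicate (β : MulAut G) :
    ∀ (n : ℕ) (x : G),
      (List.replicate n β).foldl autoComm x = (fun y => autoComm y β)^[n] x
  | 0, x => rfl
  | n + 1, x => by
    rw [List.replicate_succ, List.foldl_cons, autoComm_foldl_replicate β n,
      Function.iterate_succ_apply]

lemma mulAut_pow_apply (α : MulAut G) : ∀ (k : ℕ) (x : G), (α ^ k) x = (⇑α)^[k] x
  | 0, x => rfl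
  | k + 1, x => by
    rw [pow_succ, MulAut.mul_apply, Function.iterate_succ_apply,
      mulAut_pow_apply α k (α x)]

end Helpers

lemma aut_fix_of_comm {p q : ℕ} (hp : p.Prime) (hq : ¬ p ∣ q)
    {A : Type*} [CommGroup A] [Finite A] (hA : IsPGroup p A) (n : ℕ)
    (α : MulAut A) (hαq : α ^ q = 1)
    (h : ∀ x : A, (fun y => autoComm y α)^[n] x = 1) (x : A) : α x = x := by
  classical
  let a : AddMonoid.End (Additive A) := (MulEquiv.toAdditive α).toAddMonoidHom
  have ha_apply : ∀ y : A, a (Additive.ofMul y) = Additive.ofMul (α y) := fun _ => rfl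
  have hsmul : ∀ (m : ℕ) (g : AddMonoid.End (Additive A)) (z : Additive A),
      (m • g) z = m • g z := by
    intro m
    induction m with
    | zero => intro g z; rw [zero_nsmul, zero_nsmul]; rfl
    | succ m ih => intro g z; rw [succ_nsmul, succ_nsmul, ← ih]; rfl
  have hak : ∀ (k : ℕ) (y : A),
      (a ^ k) (Additive.ofMul y) = Additive.ofMul ((α ^ k) y) := by
    intro k y
    have hsc : Function.Semiconj (fun y : A => Additive.ofMul y) (⇑α) (⇑a) :=
      fun z => rfl
    have := (hsc.iterate_right k) y
    rw [mulAut_pow_apply]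
    exact ((congrFun (AddMonoid.End.coe_pow _ _ _) _).trans this.symm)
  have haq : a ^ q = 1 := by
    refine AddMonoidHom.ext fun z => ?_
    have := hak q z.toMul
    rw [hαq] at this
    exact this
  set f : AddMonoid.End (Additive A) := a - 1 with hf
  have hf_apply : ∀ y : A, f (Additive.ofMul y) = Additive.ofMul (autoComm y α) := by
    intro y
    show a (Additive.ofMul y) - Additive.ofMul y = _
    rw [ha_apply, autoComm, mul_comm, ofMul_mul, ofMul_inv, sub_eq_add_neg]
  have hfk : ∀ (k : ℕ) (y : A),
      (f ^ k) (Additive.ofMul y) =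
        Additive.ofMul ((fun y => autoComm y α)^[k] y) := by
    intro k y
    have hsc : Function.Semiconj (fun y : A => Additive.ofMul y)
        (fun y => autoComm y α) (⇑f) := fun z => (hf_apply z).symm
    have := (hsc.iterate_right k) y
    exact ((congrFun (AddMonoid.End.coe_pow _ _ _) _).trans this.symm)
  have hfn : f ^ n = 0 := by
    refine AddMonoidHom.ext fun z => ?_
    have := hfk n z.toMul
    rw [h z.toMul] at this
    exact this
  set S : AddMonoid.End (Additive A) := ∑ i ∈ Finset.range q, a ^ i with hS
  have hSf : S * f = 0 := by
    rw [hf, geom_sum_mul, haq, sub_self]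
  set T : AddMonoid.End (Additive A) :=
    ∑ i ∈ Finset.range q, ∑ j ∈ Finset.range i, a ^ j with hT
  have hfT : f * T = S - (q : ℕ) • 1 := by
    rw [hT, Finset.mul_sum]
    have hterm : ∀ i ∈ Finset.range q,
        f * ∑ j ∈ Finset.range i, a ^ j = a ^ i - 1 := fun i _ => by
      rw [hf, mul_geom_sum]
    rw [Finset.sum_congr rfl hterm, Finset.sum_sub_distrib, Finset.sum_const,
      Finset.card_range, hS]
  have hfa : Commute f a := (Commute.refl a).sub_left (Commute.one_left a)
  have hfT' : Commute f T := by
    refine Commute.sum_right _ _ _ fun i _ => ?_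
    exact Commute.sum_right _ _ _ fun j _ => hfa.pow_right j
  have hqf : q • f = f ^ 2 * (-T) := by
    have h0 : (0 : AddMonoid.End (Additive A)) = q • f + f ^ 2 * T := by
      have hS' : S = q • 1 + f * T := by rw [hfT]; abel
      calc (0 : AddMonoid.End (Additive A)) = S * f := hSf.symm
        _ = (q • 1 + f * T) * f := by rw [← hS']
        _ = q • f + f ^ 2 * T := by
            rw [add_mul, smul_mul_assoc, one_mul, mul_assoc, ← hfT'.eq, ← mul_assoc,
              ← pow_two]
    have h1 : q • f = -(f ^ 2 * T) := by
      rw [eq_neg_iff_add_eq_zero]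
      exact h0.symm
    exact h1.trans (mul_neg (f ^ 2) T).symm
  have hkey : ∀ k : ℕ, q ^ k • f = f ^ (k + 1) * (-T) ^ k := by
    intro k
    induction k with
    | zero => simp
    | succ k ih =>
      have hfnT : Commute f (-T) := hfT'.neg_right
      calc q ^ (k + 1) • f = q • (q ^ k • f) := by
            rw [← mul_smul, mul_comm, pow_succ]
        _ = q • (f * (f ^ k * (-T) ^ k)) := by rw [ih, pow_succ', mul_assoc]
        _ = (q • f) * (f ^ k * (-T) ^ k) := (smul_mul_assoc q f _).symm
        _ = f ^ 2 * (-T) * (f ^ k * (-T) ^ k) := by rw [hqf]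
        _ = f ^ (k + 2) * (-T) ^ (k + 1) := by
            rw [mul_assoc (f ^ 2), ← mul_assoc (-T), (hfnT.symm.pow_right k).eq,
              mul_assoc, ← pow_succ', ← mul_assoc, ← pow_add, Nat.add_comm 2 k]
  have hzero : q ^ n • f = 0 := by
    rw [hkey n, pow_succ, hfn, zero_mul, zero_mul]
  have hx : (autoComm x α) ^ q ^ n = 1 := by
    have h1 : (q ^ n • f) (Additive.ofMul x) = 0 := by rw [hzero]; rfl
    rw [hsmul, hf_apply] at h1
    have h2 : Additive.ofMul ((autoComm x α) ^ q ^ n) = Additive.ofMul (1 : A) := by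
      rw [ofMul_pow, h1]; rfl
    exact Additive.ofMul.injective h2
  obtain ⟨k, hk⟩ := hA (autoComm x α)
  have hco : Nat.Coprime (q ^ n) (p ^ k) :=
    Nat.Coprime.pow _ _ (((hp.coprime_iff_not_dvd).mpr hq).symm)
  have hd1 : orderOf (autoComm x α) ∣ q ^ n := orderOf_dvd_of_pow_eq_one hx
  have hd2 : orderOf (autoComm x α) ∣ p ^ k := orderOf_dvd_of_pow_eq_one hk
  have hdd : orderOf (autoComm x α) ∣ 1 := hco ▸ Nat.dvd_gcd hd1 hd2
  have h1 : autoComm x α = 1 := orderOf_eq_one_iff.mp (Nat.dvd_one.mp hdd)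
  rw [autoComm, inv_mul_eq_one] at h1
  exact h1.symm

universe u

lemma aut_fix {p q : ℕ} (hp : p.Prime) (hq : ¬ p ∣ q) :
    ∀ (N : ℕ) (G : Type u) [Group G] [Finite G], Nat.card G ≤ N → IsPGroup p G →
      ∀ (n : ℕ) (α : MulAut G), α ^ q = 1 →
        (∀ x : G, (fun y => autoComm y α)^[n] x = 1) → ∀ x : G, α x = x := by
  intro N
  induction N using Nat.strong_induction_on with
  | _ N IH =>
  intro G _ _ hcard hG n α hαq h x
  by_cases htop : Subgroup.center G = ⊤
  · letI : CommGroup G := Group.commGroupOfCenterEqTop htop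
    exact aut_fix_of_comm hp hq hG n α hαq h x
  · have hnt : Nontrivial G := by
      by_contra hnt
      rw [not_nontrivial_iff_subsingleton] at hnt
      exact htop ((Subgroup.eq_top_iff' _).mpr fun g => Subgroup.mem_center_iff.mpr
        fun _ => Subsingleton.elim _ _)
    set Z := Subgroup.center G with hZdef
    have hmap : Z.map α.toMonoidHom = Z :=
      Subgroup.characteristic_iff_map_eq.mp Subgroup.centerCharacteristic α
    let αZ : MulAut Z := (α.subgroupMap Z).trans (MulEquiv.subgroupCongr hmap)
    have hZcoe : ∀ z : Z, (αZ z : G) = α (z : G) := fun _ => rfl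
    have hZpow : ∀ (k : ℕ) (z : Z), ((αZ ^ k) z : G) = (α ^ k) (z : G) := by
      intro k
      induction k with
      | zero => intro z; rfl
      | succ k ihk =>
        intro z
        rw [pow_succ, pow_succ, MulAut.mul_apply, MulAut.mul_apply, ihk (αZ z),
          hZcoe]
    have hZq : αZ ^ q = 1 := by
      refine MulEquiv.ext fun z => Subtype.ext ?_
      rw [hZpow q z, hαq]
      rfl
    have hZit : ∀ z : Z, (fun y => autoComm y αZ)^[n] z = 1 := by
      intro z
      have hcZ : ∀ z : Z, ((autoComm z αZ : Z) : G) = autoComm (z : G) α := by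
        intro z
        simp [autoComm, hZcoe]
      have hsc : Function.Semiconj (fun z : Z => (z : G))
          (fun y => autoComm y αZ) (fun y => autoComm y α) := fun z => hcZ z
      exact Subtype.ext (((hsc.iterate_right n) z).trans (h (z : G)))
    have hZcard : Nat.card Z < Nat.card G := by
      have h1 : Z.index * Nat.card Z = Nat.card G := Z.index_mul_card
      have h2 : Z.index ≠ 1 := fun he => htop (Subgroup.index_eq_one.mp he)
      have h3 : Z.index ≠ 0 := Subgroup.index_ne_zero_of_finite
      have h4 : 0 < Nat.card Z := Nat.card_pos
      have h5 : 2 ≤ Z.index := by omega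
      calc Nat.card Z < 2 * Nat.card Z := by omega
        _ ≤ Z.index * Nat.card Z := Nat.mul_le_mul_right _ h5
        _ = Nat.card G := h1
    have hfixZ : ∀ g ∈ Z, α g = g := by
      intro g hg
      have h6 := IH (Nat.card Z) (lt_of_lt_of_le hZcard hcard) Z le_rfl
        (hG.to_subgroup Z) n αZ hZq hZit ⟨g, hg⟩
      have h7 := congrArg (fun z : Z => (z : G)) h6
      rw [← hZcoe ⟨g, hg⟩]
      exact h7
    -- the quotient by the center
    let Qa : MulAut (G ⧸ Z) := QuotientGroup.congr Z Z α hmap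
    have hQcoe : ∀ g : G, Qa ((g : G) : G ⧸ Z) = ((α g : G) : G ⧸ Z) :=
      fun _ => rfl
    have hQpow : ∀ (k : ℕ) (g : G),
        (Qa ^ k) ((g : G) : G ⧸ Z) = (((α ^ k) g : G) : G ⧸ Z) := by
      intro k
      induction k with
      | zero => intro g; rfl
      | succ k ihk =>
        intro g
        rw [pow_succ, pow_succ, MulAut.mul_apply, MulAut.mul_apply, hQcoe,
          ihk (α g)]
    have hQq : Qa ^ q = 1 := by
      refine MulEquiv.ext fun y => ?_
      refine QuotientGroup.induction_on y fun g => ?_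
      rw [hQpow q g, hαq]
      rfl
    have hQit : ∀ y : G ⧸ Z, (fun w => autoComm w Qa)^[n] y = 1 := by
      intro y
      refine QuotientGroup.induction_on y fun g => ?_
      have hsc : Function.Semiconj (fun g : G => ((g : G) : G ⧸ Z))
          (fun y => autoComm y α) (fun w => autoComm w Qa) := by
        intro g
        show ((autoComm g α : G) : G ⧸ Z) = autoComm ((g : G) : G ⧸ Z) Qa
        rw [autoComm, autoComm, hQcoe]
        rfl
      exact ((hsc.iterate_right n) g).symm.trans
        (by rw [h g, QuotientGroup.mk_one])
    have hQcard : Nat.card (G ⧸ Z) < Nat.card G := by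
      have h1 : Nat.card G = Nat.card (G ⧸ Z) * Nat.card Z :=
        Subgroup.card_eq_card_quotient_mul_card_subgroup Z
      haveI : Fact p.Prime := ⟨hp⟩
      haveI := hG.center_nontrivial
      have h2 : 1 < Nat.card Z := Finite.one_lt_card_iff_nontrivial.mpr ‹Nontrivial Z›
      have h3 : 0 < Nat.card (G ⧸ Z) := Nat.card_pos
      nlinarith
    have hQfix := IH (Nat.card (G ⧸ Z)) (lt_of_lt_of_le hQcard hcard) (G ⧸ Z)
      le_rfl (hG.to_quotient Z) n Qa hQq hQit
    have hzmem : x⁻¹ * α x ∈ Z := by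
      have h5 := hQfix ((x : G) : G ⧸ Z)
      rw [hQcoe] at h5
      have h6 := (QuotientGroup.eq).mp h5
      have h7 := Z.inv_mem h6
      simpa using h7
    set z : G := x⁻¹ * α x with hzdef2
    have hαx : α x = x * z := by rw [hzdef2]; group
    have hpowx : ∀ k : ℕ, (α ^ k) x = x * z ^ k := by
      intro k
      induction k with
      | zero => simp
      | succ k ihk =>
        rw [pow_succ', MulAut.mul_apply, ihk, map_mul, map_pow, hfixZ z hzmem,
          hαx, mul_assoc, ← pow_succ']
    have h8 : x * z ^ q = x := by
      rw [← hpowx q, hαq]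
      rfl
    have h9 : z ^ q = 1 :=
      mul_left_cancel (h8.trans (mul_one x).symm)
    obtain ⟨k, hk⟩ := hG z
    have hco : Nat.Coprime q (p ^ k) :=
      (((hp.coprime_iff_not_dvd).mpr hq).symm).pow_right k
    have hd1 : orderOf z ∣ q := orderOf_dvd_of_pow_eq_one h9
    have hd2 : orderOf z ∣ p ^ k := orderOf_dvd_of_pow_eq_one hk
    have hdd : orderOf z ∣ 1 := hco ▸ Nat.dvd_gcd hd1 hd2
    have h10 : z = 1 := orderOf_eq_one_iff.mp (Nat.dvd_one.mp hdd)
    rw [hαx, h10, mul_one]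

open scoped commutatorElement

/-- A finite `p`-group `G` is autonilpotent iff `Aut G` is a `p`-group. -/
theorem pGroup_autonilpotent_iff_aut_pGroup (p : ℕ) (hp : p.Prime) (G : Type*) [Group G]
    [Finite G] (hG : IsPGroup p G) :
    Autonilpotent G ↔ IsPGroup p (MulAut G) := by
  haveI : Fact p.Prime := ⟨hp⟩
  haveI : Finite (MulAut G) :=
    Finite.of_injective (fun e : MulAut G => (e : G ≃ G))
      (fun a b hab => MulEquiv.toEquiv_injective hab)
  constructor
  · rintro ⟨n, hn⟩ α
    set M := orderOf α with hM
    have hM0 : M ≠ 0 := (orderOf_pos α).ne'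
    refine ⟨M.factorization p, ?_⟩
    set β : MulAut G := α ^ p ^ M.factorization p with hβ
    have hβq : β ^ (M / p ^ M.factorization p) = 1 := by
      rw [hβ, ← pow_mul, Nat.ordProj_mul_ordCompl_eq_self M p, hM,
        pow_orderOf_eq_one]
    have hqd : ¬ p ∣ M / p ^ M.factorization p := Nat.not_dvd_ordCompl hp hM0
    have hiter : ∀ x : G, (fun y => autoComm y β)^[n] x = 1 := by
      intro x
      rw [← autoComm_foldl_replicate]
      exact hn x (List.replicate n β) List.length_replicate
    have hfix := aut_fix hp hqd (Nat.card G) G le_rfl hG n β hβq hiter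
    exact MulEquiv.ext hfix
  · intro hAut
    -- the semidirect product `G ⋊ Aut G` is a finite `p`-group, hence nilpotent
    set φ : MulAut G →* MulAut G := MonoidHom.id (MulAut G) with hφ
    let H := SemidirectProduct G (MulAut G) φ
    let e : H ≃ G × MulAut G :=
      { toFun := fun h => (h.left, h.right)
        invFun := fun g => ⟨g.1, g.2⟩
        left_inv := fun h => rfl
        right_inv := fun g => rfl }
    haveI : Finite H := Finite.of_equiv _ e.symm
    have hcard : Nat.card H = Nat.card G * Nat.card (MulAut G) := by
      rw [Nat.card_congr e, Nat.card_prod]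
    obtain ⟨c1, hc1⟩ := IsPGroup.iff_card.mp hG
    obtain ⟨c2, hc2⟩ := IsPGroup.iff_card.mp hAut
    have hH : IsPGroup p H := IsPGroup.iff_card.mpr
      ⟨c1 + c2, by rw [hcard, hc1, hc2, pow_add]⟩
    haveI : Group.IsNilpotent H := hH.isNilpotent
    obtain ⟨c, hc⟩ := nilpotent_iff_lowerCentralSeries.mp this
    refine ⟨c, fun x => ?_⟩
    intro l hl
    have key : ∀ (l : List (MulAut G)) (k : ℕ) (x : G),
        SemidirectProduct.inl x ∈ Subgroup.lowerCentralSeries (⊤ : Subgroup H) k →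
        SemidirectProduct.inl (l.foldl autoComm x) ∈
          Subgroup.lowerCentralSeries (⊤ : Subgroup H) (k + l.length) := by
      intro l
      induction l with
      | nil => intro k x hx; simpa using hx
      | cons α l ihl =>
        intro k x hx
        have step : (SemidirectProduct.inl (autoComm x α) : H) ∈
            Subgroup.lowerCentralSeries (⊤ : Subgroup H) (k + 1) := by
          have hcm : (SemidirectProduct.inl (autoComm x α) : H) =
              ⁅(SemidirectProduct.inl x : H)⁻¹, SemidirectProduct.inr α⁆ := by
            rw [commutatorElement_def, inv_inv, autoComm, map_mul, map_inv,
              mul_assoc, mul_assoc]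
            congr 1
            have := (SemidirectProduct.inl_aut (φ := φ) α x).symm
            rw [mul_assoc] at this
            rw [← map_inv]
            exact this.symm ▸ rfl
          rw [hcm, lowerCentralSeries_succ]
          exact Subgroup.commutator_mem_commutator
            ((Subgroup.lowerCentralSeries (⊤ : Subgroup H) k).inv_mem hx) (Subgroup.mem_top _)
        have h2 := ihl (k + 1) (autoComm x α) step
        rw [List.foldl_cons, List.length_cons]
        rw [show k + (l.length + 1) = k + 1 + l.length by omega]
        exact h2
    have h3 := key l 0 x (by simp)
    rw [hl, zero_add, hc, Subgroup.mem_bot] at h3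
    have h4 : SemidirectProduct.inl (l.foldl autoComm x) =
        (SemidirectProduct.inl (1 : G) : H) := by rw [h3, map_one]
    exact SemidirectProduct.inl_injective h4
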